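/- Let g : ℝ^d → ℝ be a bounded measurable function. Then E[g(X⁺)] = 2·E[F_Y(Y)·g(X)]. -/

import Mathlib

open MeasureTheory ProbabilityTheory

/-- For a bounded measurable `g`, `E[g(X⁺)] = 2 E[F_Y(Y) g(X)]`, where
`X⁺` is the winner of the pairwise comparison built from two independent identically
distributed copies `(X, Y)`, `(X', Y')`, and `F_Y` is the CDF of `Y` (law of `Y` atomless). -/
theorem stmt_0
    {Ω : Type*} [MeasurableSpace Ω] {μ : Measure Ω} [IsProbabilityMeasure μ]
    {d : ℕ} {X X' : Ω → (Fin d → ℝ)} {Y Y' : Ω → ℝ}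
    (hX : Measurable X) (hY : Measurable Y) (hX' : Measurable X') (hY' : Measurable Y')
    (hindep : IndepFun (fun ω => (X ω, Y ω)) (fun ω => (X' ω, Y' ω)) μ)
    (hident : μ.map (fun ω => (X ω, Y ω)) = μ.map (fun ω => (X' ω, Y' ω)))
    (hatomless : ∀ t : ℝ, μ {ω | Y ω = t} = 0)
    (g : (Fin d → ℝ) → ℝ) (hg : Measurable g)
    (M : ℝ) (hgM : ∀ x, |g x| ≤ M) :
    ∫ ω, g (if Y' ω ≤ Y ω then X ω else X' ω) ∂μ
      = 2 * ∫ ω, (μ {ω' | Y ω' ≤ Y ω}).toReal * g (X ω) ∂μ := by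
  have hM0 : 0 ≤ M := (abs_nonneg _).trans (hgM 0)
  have hXY : Measurable fun ω => (X ω, Y ω) := hX.prodMk hY
  have hXY' : Measurable fun ω => (X' ω, Y' ω) := hX'.prodMk hY'
  set ν : Measure ((Fin d → ℝ) × ℝ) := μ.map (fun ω => (X ω, Y ω)) with hν
  have hνprob : IsProbabilityMeasure ν := Measure.isProbabilityMeasure_map hXY.aemeasurable
  have hmap : μ.map (fun ω => ((X ω, Y ω), (X' ω, Y' ω))) = ν.prod ν := by
    rw [(indepFun_iff_map_prod_eq_prod_map_map hXY.aemeasurable hXY'.aemeasurable).mp hindep,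
      ← hident]
  -- the set {b | b.2 ≤ t} is measurable
  have hSle : ∀ t : ℝ, MeasurableSet {b : (Fin d → ℝ) × ℝ | b.2 ≤ t} := fun t =>
    measurable_snd measurableSet_Iic
  -- CDF
  set F : ℝ → ℝ := fun t => (ν {b : (Fin d → ℝ) × ℝ | b.2 ≤ t}).toReal with hF
  have hFmono : Monotone F := by
    intro s t hst
    exact ENNReal.toReal_mono (measure_ne_top ν _)
      (measure_mono (fun b hb => le_trans hb hst))
  have hFmeas : Measurable F := hFmono.measurable
  have hA : ∀ t, μ {ω' | Y ω' ≤ t} = ν {b : (Fin d → ℝ) × ℝ | b.2 ≤ t} := by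
    intro t
    rw [hν, Measure.map_apply hXY (hSle t)]
    rfl
  have hatomν : ∀ t, ν {b : (Fin d → ℝ) × ℝ | b.2 = t} = 0 := by
    intro t
    have hm : MeasurableSet {b : (Fin d → ℝ) × ℝ | b.2 = t} :=
      measurable_snd (measurableSet_singleton t)
    rw [hν, Measure.map_apply hXY hm]
    exact hatomless t
  -- the functions on the product space
  set G : ((Fin d → ℝ) × ℝ) × ((Fin d → ℝ) × ℝ) → ℝ :=
    fun p => g (if p.2.2 ≤ p.1.2 then p.1.1 else p.2.1) with hGdef
  set G1 : ((Fin d → ℝ) × ℝ) × ((Fin d → ℝ) × ℝ) → ℝ :=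
    fun p => if p.2.2 ≤ p.1.2 then g p.1.1 else 0 with hG1def
  set G2 : ((Fin d → ℝ) × ℝ) × ((Fin d → ℝ) × ℝ) → ℝ :=
    fun p => if p.2.2 ≤ p.1.2 then 0 else g p.2.1 with hG2def
  have hsle : MeasurableSet {p : ((Fin d → ℝ) × ℝ) × ((Fin d → ℝ) × ℝ) | p.2.2 ≤ p.1.2} :=
    measurableSet_le (measurable_snd.comp measurable_snd) (measurable_snd.comp measurable_fst)
  have hGmeas : Measurable G :=
    hg.comp (Measurable.ite hsle (measurable_fst.fst) (measurable_snd.fst))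
  have hG1meas : Measurable G1 :=
    Measurable.ite hsle (hg.comp measurable_fst.fst) measurable_const
  have hG2meas : Measurable G2 :=
    Measurable.ite hsle measurable_const (hg.comp measurable_snd.fst)
  have hbound : ∀ (f : ((Fin d → ℝ) × ℝ) × ((Fin d → ℝ) × ℝ) → ℝ), Measurable f →
      (∀ p, |f p| ≤ M) → Integrable f (ν.prod ν) := fun f hf hb =>
    Integrable.mono' (integrable_const M) hf.aestronglyMeasurable
      (ae_of_all _ fun p => by simpa using hb p)
  have hG1int : Integrable G1 (ν.prod ν) := hbound G1 hG1meas (fun p => by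
    simp only [hG1def]; split <;> simp [hgM, hM0])
  have hG2int : Integrable G2 (ν.prod ν) := hbound G2 hG2meas (fun p => by
    simp only [hG2def]; split <;> simp [hgM, hM0])
  have hGsplit : ∀ p, G p = G1 p + G2 p := by
    intro p
    simp only [hGdef, hG1def, hG2def]
    split <;> simp
  -- null diagonal
  have hdiag : MeasurableSet {p : ((Fin d → ℝ) × ℝ) × ((Fin d → ℝ) × ℝ) | p.1.2 = p.2.2} :=
    measurableSet_eq_fun (measurable_fst.snd) (measurable_snd.snd)
  have hnull : (ν.prod ν) {p : ((Fin d → ℝ) × ℝ) × ((Fin d → ℝ) × ℝ) | p.1.2 = p.2.2} = 0 := by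
    have h0 : ∀ a : (Fin d → ℝ) × ℝ, ν {b : (Fin d → ℝ) × ℝ | a.2 = b.2} = 0 := by
      intro a
      have : {b : (Fin d → ℝ) × ℝ | a.2 = b.2} = {b : (Fin d → ℝ) × ℝ | b.2 = a.2} := by
        ext b; simp [eq_comm]
      rw [this]
      exact hatomν a.2
    rw [Measure.prod_apply hdiag]
    simp [h0]
  -- swap symmetry : ∫ G2 = ∫ G1
  have hswap : ∫ p, G2 p ∂(ν.prod ν) = ∫ p, G1 p ∂(ν.prod ν) := by
    have h1 : ∫ p, G2 p ∂(ν.prod ν) = ∫ p, G2 (Prod.swap p) ∂(ν.prod ν) :=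
      (integral_prod_swap G2).symm
    rw [h1]
    apply integral_congr_ae
    have : ∀ᵐ p ∂(ν.prod ν), ¬ (p.1.2 = p.2.2) := by
      rw [ae_iff]
      simpa using hnull
    filter_upwards [this] with p hp
    simp only [hG2def, hG1def, Prod.snd_swap, Prod.fst_swap]
    rcases lt_trichotomy p.1.2 p.2.2 with h | h | h
    · simp [h.le, h.not_ge]
    · exact absurd h hp
    · simp [h.le, h.not_ge]
  -- compute ∫ G1
  have hG1val : ∫ p, G1 p ∂(ν.prod ν) = ∫ a, F a.2 * g a.1 ∂ν := by
    rw [integral_prod _ hG1int]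
    apply integral_congr_ae
    apply ae_of_all
    intro a
    show ∫ b, G1 (a, b) ∂ν = F a.2 * g a.1
    have h1 : ∫ b, G1 (a, b) ∂ν
        = ∫ b, Set.indicator {b : (Fin d → ℝ) × ℝ | b.2 ≤ a.2} (fun _ => g a.1) b ∂ν :=
      integral_congr_ae (ae_of_all _ fun b => by simp [hG1def, Set.indicator_apply])
    rw [h1, integral_indicator_const _ (hSle a.2), hF]
    simp [mul_comm, smul_eq_mul, Measure.real]
  -- LHS
  have hZ : Measurable fun ω => ((X ω, Y ω), (X' ω, Y' ω)) := hXY.prodMk hXY'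
  have hLHS : ∫ ω, g (if Y' ω ≤ Y ω then X ω else X' ω) ∂μ = ∫ p, G p ∂(ν.prod ν) := by
    rw [← hmap, integral_map hZ.aemeasurable hGmeas.aestronglyMeasurable]
  -- RHS
  have hRHS : ∫ ω, (μ {ω' | Y ω' ≤ Y ω}).toReal * g (X ω) ∂μ = ∫ a, F a.2 * g a.1 ∂ν := by
    have h1 : ∀ ω, (μ {ω' | Y ω' ≤ Y ω}).toReal * g (X ω) = F (Y ω) * g (X ω) := by
      intro ω
      rw [hA (Y ω)]
    simp_rw [h1]
    rw [hν, integral_map hXY.aemeasurable]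
    exact ((hFmeas.comp measurable_snd).mul (hg.comp measurable_fst)).aestronglyMeasurable
  rw [hLHS, hRHS, integral_congr_ae (ae_of_all _ hGsplit),
    integral_add hG1int hG2int, hswap, hG1val]
  ring
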